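/- Time non-resonance for the cubic phase in the case θ₀ = θ₁ ≠ θ₂: for all ξ, η, σ ∈ ℝ², the resonance function φ(ξ,η,σ) = −⟨ξ⟩ + ⟨ξ+η⟩ + ⟨ξ+η+σ⟩ + ⟨ξ+σ⟩ satisfies φ(ξ,η,σ) ≥ 3/(⟨ξ⟩ + ⟨η⟩ + ⟨ξ+η⟩) > 0. -/
import Mathlib


noncomputable section

lemma key_sqrt (A B C : ℝ) (hA : 0 ≤ A) (hB : 0 ≤ B) (hC : 0 ≤ C) (h : C ≤ A + B) :
    3 / (Real.sqrt (1 + A ^ 2) + Real.sqrt (1 + B ^ 2) + Real.sqrt (1 + C ^ 2))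
      ≤ Real.sqrt (1 + A ^ 2) + Real.sqrt (1 + B ^ 2) - Real.sqrt (1 + C ^ 2) := by
  have hA2 : (0:ℝ) < 1 + A ^ 2 := by positivity
  have hB2 : (0:ℝ) < 1 + B ^ 2 := by positivity
  have hC2 : (0:ℝ) < 1 + C ^ 2 := by positivity
  set a := Real.sqrt (1 + A ^ 2) with ha_def
  set b := Real.sqrt (1 + B ^ 2) with hb_def
  set c := Real.sqrt (1 + C ^ 2) with hc_def
  have ha : 0 < a := Real.sqrt_pos.mpr hA2
  have hb : 0 < b := Real.sqrt_pos.mpr hB2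
  have hc : 0 < c := Real.sqrt_pos.mpr hC2
  have ha2 : a ^ 2 = 1 + A ^ 2 := Real.sq_sqrt hA2.le
  have hb2 : b ^ 2 = 1 + B ^ 2 := Real.sq_sqrt hB2.le
  have hc2 : c ^ 2 = 1 + C ^ 2 := Real.sq_sqrt hC2.le
  have hab : 1 + A * B ≤ a * b := by
    have hsq : (1 + A * B) ^ 2 ≤ (a * b) ^ 2 := by
      have : (a * b) ^ 2 = (1 + A ^ 2) * (1 + B ^ 2) := by
        rw [mul_pow, ha2, hb2]
      rw [this]
      nlinarith [sq_nonneg (A - B)]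
    have h1 : 0 ≤ 1 + A * B := by positivity
    nlinarith [mul_pos ha hb]
  have hCsq : C ^ 2 ≤ (A + B) ^ 2 := by nlinarith
  rw [div_le_iff₀ (by positivity)]
  nlinarith [mul_pos ha hb]

/-- Japanese bracket `⟨ξ⟩ = (1+|ξ|²)^{1/2}` on `ℝ²`. -/
def jb (ξ : EuclideanSpace ℝ (Fin 2)) : ℝ := Real.sqrt (1 + ‖ξ‖ ^ 2)

lemma one_le_jb (x : EuclideanSpace ℝ (Fin 2)) : 1 ≤ jb x := by
  have h : Real.sqrt 1 ≤ Real.sqrt (1 + ‖x‖ ^ 2) :=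
    Real.sqrt_le_sqrt (by nlinarith [sq_nonneg ‖x‖])
  simpa [jb] using h

/-- Time non-resonance for the cubic phase in the case `θ₀ = θ₁ ≠ θ₂`. -/
theorem cubic_time_nonresonance (ξ η σ : EuclideanSpace ℝ (Fin 2)) :
    -jb ξ + jb (ξ + η) + jb (ξ + η + σ) + jb (ξ + σ) ≥
      3 / (jb ξ + jb η + jb (ξ + η)) ∧
    0 < -jb ξ + jb (ξ + η) + jb (ξ + η + σ) + jb (ξ + σ) := by
  have h1 : 3 / (jb (ξ + η) + jb η + jb ξ) ≤ jb (ξ + η) + jb η - jb ξ := by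
    have hnorm : ‖ξ‖ ≤ ‖ξ + η‖ + ‖η‖ := by
      have : ξ = (ξ + η) - η := by abel
      calc ‖ξ‖ = ‖(ξ + η) - η‖ := by rw [← this]
        _ ≤ ‖ξ + η‖ + ‖η‖ := norm_sub_le _ _
    simpa [jb] using key_sqrt ‖ξ + η‖ ‖η‖ ‖ξ‖ (norm_nonneg _) (norm_nonneg _)
      (norm_nonneg _) hnorm
  have h2 : 3 / (jb (ξ + η + σ) + jb (ξ + σ) + jb η)
      ≤ jb (ξ + η + σ) + jb (ξ + σ) - jb η := by
    have hnorm : ‖η‖ ≤ ‖ξ + η + σ‖ + ‖ξ + σ‖ := by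
      have : η = (ξ + η + σ) - (ξ + σ) := by abel
      calc ‖η‖ = ‖(ξ + η + σ) - (ξ + σ)‖ := by rw [← this]
        _ ≤ ‖ξ + η + σ‖ + ‖ξ + σ‖ := norm_sub_le _ _
    simpa [jb] using key_sqrt ‖ξ + η + σ‖ ‖ξ + σ‖ ‖η‖ (norm_nonneg _) (norm_nonneg _)
      (norm_nonneg _) hnorm
  have h2' : 0 ≤ jb (ξ + η + σ) + jb (ξ + σ) - jb η := by
    refine le_trans ?_ h2
    have : 0 < jb (ξ + η + σ) + jb (ξ + σ) + jb η := by
      have := one_le_jb (ξ + η + σ); have := one_le_jb (ξ + σ); have := one_le_jb η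
      linarith
    exact div_nonneg (by norm_num) this.le
  have hDeq : jb ξ + jb η + jb (ξ + η) = jb (ξ + η) + jb η + jb ξ := by ring
  have hDpos : 0 < jb ξ + jb η + jb (ξ + η) := by
    have := one_le_jb ξ; have := one_le_jb η; have := one_le_jb (ξ + η)
    linarith
  constructor
  · rw [ge_iff_le, hDeq]
    linarith
  · have : 0 < 3 / (jb ξ + jb η + jb (ξ + η)) := by positivity
    rw [hDeq] at this
    linarith
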